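/- Let V be a subset of EuclideanSpace ℝ (Fin N) and φ : EuclideanSpace ℝ (Fin N) → ℝ a density such that φ, the map q ↦ φ q • q, and the map q ↦ φ q * ‖q‖^2 are all integrable on V with respect to the volume measure. Set m := ∫ q in V, φ q and b := ∫ q in V, φ q • q. Then at every point p the function f(p) := ∫ q in V, φ q * ‖q - p‖^2 has gradient 2 • (m • p - b); in particular, when m ≠ 0 the gradient equals 2m(p - c) where c = m⁻¹ • b is the centroid of V with respect to the density φ. -/

import Mathlib

open MeasureTheory

set_option maxHeartbeats 1000000

/-- The gradient of the expected sensing cost `p ↦ ∫_V φ(q) ‖q - p‖² dq` over a fixed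
region `V` is `2 (m p - b)`, where `m` is the mass and `b` the first moment of `V`
with respect to the density `φ`. -/
theorem hasGradientAt_expected_sensing_cost {N : ℕ}
    (V : Set (EuclideanSpace ℝ (Fin N))) (φ : EuclideanSpace ℝ (Fin N) → ℝ)
    (hφ : IntegrableOn φ V volume)
    (hφq : IntegrableOn (fun q => φ q • q) V volume)
    (hφsq : IntegrableOn (fun q => φ q * ‖q‖ ^ 2) V volume)
    (m : ℝ) (hm : m = ∫ q in V, φ q)
    (b : EuclideanSpace ℝ (Fin N)) (hb : b = ∫ q in V, φ q • q)
    (p : EuclideanSpace ℝ (Fin N)) :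
    HasGradientAt (fun x : EuclideanSpace ℝ (Fin N) => ∫ q in V, φ q * ‖q - x‖ ^ 2)
      ((2 : ℝ) • (m • p - b)) p := by
  have key : (fun x : EuclideanSpace ℝ (Fin N) => ∫ q in V, φ q * ‖q - x‖ ^ 2)
      = fun x : EuclideanSpace ℝ (Fin N) => (∫ q in V, φ q * ‖q‖ ^ 2) - 2 * inner ℝ b x + m * ‖x‖ ^ 2 := by
    funext x
    have h1 : IntegrableOn (fun q : EuclideanSpace ℝ (Fin N) => (2 : ℝ) * inner ℝ (φ q • q) x) V volume := by
      have h := ((innerSL ℝ x).integrable_comp hφq).const_mul 2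
      have : (fun q : EuclideanSpace ℝ (Fin N) => (2 : ℝ) * inner ℝ (φ q • q) x)
          = fun q : EuclideanSpace ℝ (Fin N) => 2 * inner ℝ x (φ q • q) := funext fun q => by rw [real_inner_comm]
      rw [this]
      simpa only [innerSL_apply_apply, IntegrableOn] using h
    have h2 : IntegrableOn (fun q : EuclideanSpace ℝ (Fin N) => φ q * ‖x‖ ^ 2) V volume := hφ.mul_const _
    have heq : ∀ q : EuclideanSpace ℝ (Fin N), φ q * ‖q - x‖ ^ 2
        = (φ q * ‖q‖ ^ 2 - 2 * inner ℝ (φ q • q) x) + φ q * ‖x‖ ^ 2 := by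
      intro q
      rw [@norm_sub_sq_real (EuclideanSpace ℝ (Fin N)), real_inner_smul_left]
      ring
    calc (∫ q in V, φ q * ‖q - x‖ ^ 2)
        = ∫ q in V, ((φ q * ‖q‖ ^ 2 - 2 * inner ℝ (φ q • q) x) + φ q * ‖x‖ ^ 2) := by
          exact integral_congr_ae (Filter.Eventually.of_forall fun q => heq q)
      _ = (∫ q in V, φ q * ‖q‖ ^ 2) - 2 * inner ℝ b x + m * ‖x‖ ^ 2 := by
          have hsub : IntegrableOn (fun q : EuclideanSpace ℝ (Fin N) =>
              φ q * ‖q‖ ^ 2 - 2 * inner ℝ (φ q • q) x) V volume := hφsq.sub h1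
          rw [integral_add hsub h2, integral_sub hφsq h1, integral_mul_const,
            integral_const_mul, hm, hb]
          congr 2
          rw [show (fun q : EuclideanSpace ℝ (Fin N) => (inner ℝ (φ q • q) x : ℝ)) = fun q => inner ℝ x (φ q • q) from
            funext fun q => real_inner_comm _ _, integral_inner hφq, real_inner_comm]
  rw [key, hasGradientAt_iff_hasFDerivAt]
  have hA : HasFDerivAt (fun x : EuclideanSpace ℝ (Fin N) => 2 * inner ℝ b x) ((2 : ℝ) • innerSL ℝ b) p := by
    simpa using ((innerSL ℝ b).hasFDerivAt (x := p)).const_mul (2 : ℝ)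
  have hB : HasFDerivAt (fun x : EuclideanSpace ℝ (Fin N) => m * ‖x‖ ^ 2) (m • ((2 : ℕ) • innerSL ℝ p)) p :=
    ((hasStrictFDerivAt_norm_sq p).hasFDerivAt).const_mul m
  have h := ((hasFDerivAt_const (∫ q in V, φ q * ‖q‖ ^ 2) p).sub hA).add hB
  convert h using 1
  · rfl
  · rfl
  · rfl
  · ext v
    simp [inner_sub_left, inner_smul_left, real_inner_comm]
    ring
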